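/- Let d ≥ 2, p, q ∈ [0,1], and γ ≥ 1. For the isotropic states ζ^q and ζ^p on ℂ^d ⊗ ℂ^d, the PPT-measured hockey-stick divergence satisfies E_γ^PPT(ζ^q‖ζ^p) = max{0, (q − γp) + ((1−q) − γ(1−p))/(d+1), (d/(d+1))·((1−q) − γ(1−p))}. -/

import Mathlib

noncomputable section
open Matrix ComplexOrder

/-- Bipartite complex matrices on ℂ^d ⊗ ℂ^d. -/
abbrev BMat (d : ℕ) := Matrix (Fin d × Fin d) (Fin d × Fin d) ℂ

/-- The maximally entangled state `Φ = (1/d) Σ_{i,j} |i⟩⟨j| ⊗ |i⟩⟨j|`. -/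
def maxEnt (d : ℕ) : BMat d :=
  fun p q => if p.1 = p.2 ∧ q.1 = q.2 then ((d : ℂ))⁻¹ else 0

/-- The orthogonal complement state `Φ⊥ = (I − Φ)/(d² − 1)`. -/
def maxEntPerp (d : ℕ) : BMat d := (((d : ℂ) ^ 2 - 1))⁻¹ • (1 - maxEnt d)

/-- The isotropic state `ζ^p = pΦ + (1−p)Φ⊥`. -/
def iso (d : ℕ) (p : ℝ) : BMat d := (p : ℂ) • maxEnt d + ((1 - p : ℝ) : ℂ) • maxEntPerp d

/-- The partial transpose on the second tensor factor:
`T_B(M)((a,b),(a',b')) := M((a,b'),(a',b))`. -/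
def ptB {d : ℕ} (M : BMat d) : BMat d :=
  fun p q => M (p.1, q.2) (q.1, p.2)

/-- PPT-measured hockey-stick divergence for γ ≥ 1. -/
def EgPPT {d : ℕ} (γ : ℝ) (ρ σ : BMat d) : ℝ :=
  sSup {x : ℝ | ∃ M : BMat d, M.PosSemidef ∧ ((1 : BMat d) - M).PosSemidef ∧
    (ptB M).PosSemidef ∧ ((1 : BMat d) - ptB M).PosSemidef ∧
    x = ((M * (ρ - (γ : ℂ) • σ)).trace).re}

section Aux

lemma psd_trace_nonneg {n : Type*} [Fintype n] [DecidableEq n]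
    {A : Matrix n n ℂ} (hA : A.PosSemidef) : 0 ≤ A.trace := by
  apply Finset.sum_nonneg
  intro i _
  have := hA.dotProduct_mulVec_nonneg (Pi.single i 1)
  simpa [dotProduct, Matrix.mulVec, Pi.single_apply] using this

lemma psd_mul_trace_nonneg {n : Type*} [Fintype n] [DecidableEq n]
    {A B : Matrix n n ℂ} (hA : A.PosSemidef) (hB : B.PosSemidef) :
    0 ≤ (A * B).trace := by
  obtain ⟨C, rfl⟩ : ∃ C : Matrix n n ℂ, B = Cᴴ * C := by
    open scoped MatrixOrder in
    obtain ⟨X, hX, -, hXB⟩ := CFC.exists_sqrt_of_isSelfAdjoint_of_quasispectrumRestricts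
      hB.isHermitian (QuasispectrumRestricts.nnreal_of_nonneg hB.nonneg)
    exact ⟨X, by rw [← hXB]; exact congrArg (· * X) hX.symm⟩
  have h1 : (A * (Cᴴ * C)).trace = (C * A * Cᴴ).trace := by
    rw [← Matrix.mul_assoc, Matrix.trace_mul_cycle]
  rw [h1]
  exact psd_trace_nonneg (hA.mul_mul_conjTranspose_same C)

lemma psd_mul_trace_re_nonneg {n : Type*} [Fintype n] [DecidableEq n]
    {A B : Matrix n n ℂ} (hA : A.PosSemidef) (hB : B.PosSemidef) :
    0 ≤ ((A * B).trace).re :=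
  (Complex.le_def.mp (psd_mul_trace_nonneg hA hB)).1

lemma psd_smul {n : Type*} [Fintype n]
    {A : Matrix n n ℂ} (hA : A.PosSemidef) {c : ℝ} (hc : 0 ≤ c) :
    ((c : ℂ) • A).PosSemidef := by
  refine Matrix.posSemidef_iff_dotProduct_mulVec.mpr ⟨?_, ?_⟩
  · unfold Matrix.IsHermitian
    rw [Matrix.conjTranspose_smul, hA.1.eq]
    simp
  · intro x
    rw [Matrix.smul_mulVec, dotProduct_smul]
    exact smul_nonneg (Complex.zero_le_real.mpr hc) (hA.dotProduct_mulVec_nonneg x)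

variable {d : ℕ}




variable {d : ℕ}

lemma coe_nonneg {r : ℝ} (hr : 0 ≤ r) : (0:ℂ) ≤ (r:ℂ) := Complex.zero_le_real.mpr hr

lemma coe_inv_nat_nonneg : (0:ℂ) ≤ ((d:ℂ))⁻¹ := by
  have : ((d:ℂ))⁻¹ = (((d:ℝ)⁻¹ : ℝ) : ℂ) := by push_cast; ring
  rw [this]; exact coe_nonneg (by positivity)

lemma sum_ite_diag {M : Type*} [AddCommMonoid M] (f : Fin d × Fin d → M) :
    ∑ q : Fin d × Fin d, (if q.1 = q.2 then f q else 0) = ∑ i, f (i,i) := by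
  rw [Fintype.sum_prod_type]
  simp

lemma maxEnt_form (x : Fin d × Fin d → ℂ) :
    dotProduct (star x) ((maxEnt d) *ᵥ x)
      = (d:ℂ)⁻¹ * (star (∑ i, x (i,i)) * (∑ i, x (i,i))) := by
  have h1 : ∀ pp : Fin d × Fin d, (maxEnt d *ᵥ x) pp
      = if pp.1 = pp.2 then (d:ℂ)⁻¹ * (∑ i, x (i,i)) else 0 := by
    intro pp
    simp only [Matrix.mulVec, dotProduct, maxEnt]
    by_cases h : pp.1 = pp.2
    · simp only [h, true_and, if_true]
      rw [Finset.mul_sum, ← sum_ite_diag (fun q => (d:ℂ)⁻¹ * x q)]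
      exact Finset.sum_congr rfl (fun q _ => by split_ifs <;> simp)
    · simp [h]
  simp only [dotProduct, h1, Pi.star_apply, mul_ite, mul_zero]
  rw [sum_ite_diag (fun q => star (x q) * ((d:ℂ)⁻¹ * ∑ i, x (i,i))), ← Finset.sum_mul,
    star_sum]
  ring

lemma maxEnt_psd : (maxEnt d).PosSemidef := by
  refine Matrix.posSemidef_iff_dotProduct_mulVec.mpr ⟨?_, ?_⟩
  · ext p q
    simp only [Matrix.conjTranspose_apply, maxEnt]
    split_ifs with h1 h2 h2 <;> simp_all [and_comm, eq_comm] <;> tauto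
  · intro x
    rw [maxEnt_form]
    exact mul_nonneg coe_inv_nat_nonneg (star_mul_self_nonneg _)

-- 1 - maxEnt PSD
lemma one_sub_maxEnt_psd (hd0 : 0 < d) : ((1 : BMat d) - maxEnt d).PosSemidef := by
  refine Matrix.posSemidef_iff_dotProduct_mulVec.mpr ⟨?_, ?_⟩
  · exact Matrix.IsHermitian.sub Matrix.isHermitian_one maxEnt_psd.1
  · intro x
    rw [Matrix.sub_mulVec, dotProduct_sub, Matrix.one_mulVec, maxEnt_form]
    have hx : dotProduct (star x) x = ((∑ pp : Fin d × Fin d, Complex.normSq (x pp) : ℝ) : ℂ) := by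
      push_cast
      simp only [dotProduct, Pi.star_apply]
      exact Finset.sum_congr rfl fun pp _ => by
        rw [Complex.star_def, Complex.normSq_eq_conj_mul_self]
    rw [hx, star_sum]
    have hz : (∑ i, star (x (i,i))) * (∑ i, x (i,i))
        = ((Complex.normSq (∑ i, x (i,i)) : ℝ) : ℂ) := by
      rw [← star_sum, Complex.star_def, ← Complex.normSq_eq_conj_mul_self]
    rw [hz]
    have hd : ((d:ℂ))⁻¹ = (((d:ℝ)⁻¹ : ℝ) : ℂ) := by push_cast; ring
    rw [hd, ← Complex.ofReal_mul, ← Complex.ofReal_sub]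
    rw [Complex.zero_le_real]
    -- real inequality
    have key : Complex.normSq (∑ i, x (i,i)) ≤ d * ∑ i, Complex.normSq (x (i,i)) := by
      have h1 : ‖∑ i, x (i,i)‖ ≤ ∑ i, ‖x (i,i)‖ := norm_sum_le _ _
      have h2 : (∑ i, ‖x (i,i)‖)^2 ≤ (Finset.univ.card : ℝ) * ∑ i, ‖x (i,i)‖^2 :=
        sq_sum_le_card_mul_sum_sq
      have h3 : Complex.normSq (∑ i, x (i,i)) = ‖∑ i, x (i,i)‖^2 := by
        rw [← Complex.sq_norm]
      have h4 : ∀ i : Fin d, ‖x (i,i)‖^2 = Complex.normSq (x (i,i)) := fun i => by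
        rw [← Complex.sq_norm]
      rw [h3]
      calc ‖∑ i, x (i,i)‖^2 ≤ (∑ i, ‖x (i,i)‖)^2 := by
            apply pow_le_pow_left₀ (norm_nonneg _) h1
        _ ≤ (Finset.univ.card : ℝ) * ∑ i, ‖x (i,i)‖^2 := h2
        _ = d * ∑ i, Complex.normSq (x (i,i)) := by
            simp only [Finset.card_univ, Fintype.card_fin]
            congr 1
            exact Finset.sum_congr rfl fun i _ => h4 i
    have hsub : ∑ i, Complex.normSq (x (i,i)) ≤ ∑ pp : Fin d × Fin d, Complex.normSq (x pp) := by
      rw [← sum_ite_diag (fun q => Complex.normSq (x q))]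
      apply Finset.sum_le_sum
      intro pp _
      split_ifs <;> [exact le_refl _; exact Complex.normSq_nonneg _]
    have htot : Complex.normSq (∑ i, x (i,i)) ≤ (d:ℝ) * ∑ pp : Fin d × Fin d, Complex.normSq (x pp) :=
      le_trans key (mul_le_mul_of_nonneg_left hsub (Nat.cast_nonneg d))
    have hdpos : (0:ℝ) < d := by exact_mod_cast hd0
    rw [sub_nonneg]
    calc (d:ℝ)⁻¹ * Complex.normSq (∑ i, x (i,i))
        ≤ (d:ℝ)⁻¹ * ((d:ℝ) * ∑ pp : Fin d × Fin d, Complex.normSq (x pp)) :=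
          mul_le_mul_of_nonneg_left htot (inv_nonneg.mpr hdpos.le)
      _ = ∑ pp : Fin d × Fin d, Complex.normSq (x pp) := by field_simp

/-- The swap (flip) matrix. -/
def Fmat (d : ℕ) : BMat d := fun p q => if p.1 = q.2 ∧ p.2 = q.1 then 1 else 0

lemma Fmat_herm : (Fmat d).IsHermitian := by
  ext p q
  simp only [Matrix.conjTranspose_apply, Fmat]
  split_ifs with h1 h2 h2 <;> simp_all <;> simp_all [eq_comm]

lemma sum_swap_reindex (f : Fin d × Fin d → ℂ) :
    ∑ p : Fin d × Fin d, f (p.2, p.1) = ∑ p : Fin d × Fin d, f p :=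
  Fintype.sum_equiv (Equiv.prodComm (Fin d) (Fin d)) _ _ (fun p => rfl)

lemma Fmat_mulVec (x : Fin d × Fin d → ℂ) (pp : Fin d × Fin d) :
    (Fmat d *ᵥ x) pp = x (pp.2, pp.1) := by
  simp only [Matrix.mulVec, dotProduct, Fmat, ite_mul, one_mul, zero_mul]
  rw [show (∑ q : Fin d × Fin d, if pp.1 = q.2 ∧ pp.2 = q.1 then x q else 0)
      = ∑ q : Fin d × Fin d, if q = (pp.2, pp.1) then x q else 0 from
    Finset.sum_congr rfl fun q _ => by
      congr 1
      simp [Prod.ext_iff, eq_comm, and_comm]]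
  simp

lemma one_add_F_psd : ((1 : BMat d) + Fmat d).PosSemidef := by
  refine Matrix.posSemidef_iff_dotProduct_mulVec.mpr ⟨?_, ?_⟩
  · exact Matrix.isHermitian_one.add Fmat_herm
  · intro x
    rw [Matrix.add_mulVec, dotProduct_add, Matrix.one_mulVec]
    have : dotProduct (star x) (Fmat d *ᵥ x) = ∑ p : Fin d × Fin d, star (x p) * x (p.2, p.1) := by
      simp only [dotProduct, Pi.star_apply, Fmat_mulVec]
    rw [this]
    have expand : dotProduct (star x) x + ∑ p : Fin d × Fin d, star (x p) * x (p.2, p.1)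
        = (2:ℂ)⁻¹ * ∑ p : Fin d × Fin d,
            star (x p + x (p.2, p.1)) * (x p + x (p.2, p.1)) := by
      have h1 : ∑ p : Fin d × Fin d, star (x (p.2, p.1)) * x (p.2, p.1)
          = ∑ p : Fin d × Fin d, star (x p) * x p :=
        sum_swap_reindex (fun p => star (x p) * x p)
      have h2 : ∑ p : Fin d × Fin d, star (x (p.2, p.1)) * x p
          = ∑ p : Fin d × Fin d, star (x p) * x (p.2, p.1) := by
        rw [← sum_swap_reindex (fun p => star (x p) * x (p.2, p.1))]
      simp only [star_add, add_mul, mul_add, Finset.sum_add_distrib, h1, h2,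
        dotProduct, Pi.star_apply]
      ring
    rw [expand]
    refine mul_nonneg (by
      rw [show ((2:ℂ))⁻¹ = (((2:ℝ)⁻¹ : ℝ) : ℂ) by norm_num]
      exact coe_nonneg (by norm_num)) ?_
    exact Finset.sum_nonneg fun p _ => star_mul_self_nonneg _

lemma one_sub_F_psd : ((1 : BMat d) - Fmat d).PosSemidef := by
  refine Matrix.posSemidef_iff_dotProduct_mulVec.mpr ⟨?_, ?_⟩
  · exact Matrix.isHermitian_one.sub Fmat_herm
  · intro x
    rw [Matrix.sub_mulVec, dotProduct_sub, Matrix.one_mulVec]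
    have : dotProduct (star x) (Fmat d *ᵥ x) = ∑ p : Fin d × Fin d, star (x p) * x (p.2, p.1) := by
      simp only [dotProduct, Pi.star_apply, Fmat_mulVec]
    rw [this]
    have expand : dotProduct (star x) x - ∑ p : Fin d × Fin d, star (x p) * x (p.2, p.1)
        = (2:ℂ)⁻¹ * ∑ p : Fin d × Fin d,
            star (x p - x (p.2, p.1)) * (x p - x (p.2, p.1)) := by
      have h1 : ∑ p : Fin d × Fin d, star (x (p.2, p.1)) * x (p.2, p.1)
          = ∑ p : Fin d × Fin d, star (x p) * x p :=
        sum_swap_reindex (fun p => star (x p) * x p)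
      have h2 : ∑ p : Fin d × Fin d, star (x (p.2, p.1)) * x p
          = ∑ p : Fin d × Fin d, star (x p) * x (p.2, p.1) := by
        rw [← sum_swap_reindex (fun p => star (x p) * x (p.2, p.1))]
      simp only [star_sub, sub_mul, mul_sub, Finset.sum_sub_distrib, h1, h2,
        dotProduct, Pi.star_apply]
      ring
    rw [expand]
    refine mul_nonneg (by
      rw [show ((2:ℂ))⁻¹ = (((2:ℝ)⁻¹ : ℝ) : ℂ) by norm_num]
      exact coe_nonneg (by norm_num)) ?_
    exact Finset.sum_nonneg fun p _ => star_mul_self_nonneg _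

lemma ptB_add (A B : BMat d) : ptB (A + B) = ptB A + ptB B := rfl
lemma ptB_sub (A B : BMat d) : ptB (A - B) = ptB A - ptB B := rfl
lemma ptB_smul (c : ℂ) (A : BMat d) : ptB (c • A) = c • ptB A := rfl
lemma ptB_zero : ptB (0 : BMat d) = 0 := rfl

lemma ptB_one : ptB (1 : BMat d) = 1 := by
  ext p q
  simp only [ptB, Matrix.one_apply]
  congr 1
  simp [Prod.ext_iff, and_comm, eq_comm]

lemma ptB_maxEnt : ptB (maxEnt d) = (d : ℂ)⁻¹ • Fmat d := by
  ext p q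
  simp only [ptB, maxEnt, Fmat, Matrix.smul_apply, smul_eq_mul]
  split_ifs with h1 h2 h2 <;> simp_all [eq_comm]

lemma trace_ptB (M : BMat d) : (ptB M).trace = M.trace := rfl

-- trace identities
lemma trace_one_b : (1 : BMat d).trace = (d:ℂ)^2 := by
  rw [Matrix.trace_one]
  simp [Fintype.card_prod]
  ring

lemma trace_maxEnt (hd0 : 0 < d) : (maxEnt d).trace = 1 := by
  unfold Matrix.trace maxEnt
  simp only [Matrix.diag]
  rw [show (∑ p : Fin d × Fin d, (if p.1 = p.2 ∧ p.1 = p.2 then ((d:ℂ))⁻¹ else 0))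
      = ∑ p : Fin d × Fin d, (if p.1 = p.2 then ((d:ℂ))⁻¹ else 0) from
    Finset.sum_congr rfl fun p _ => by simp [and_self]]
  rw [sum_ite_diag (fun _ => ((d:ℂ))⁻¹)]
  simp
  rw [mul_inv_cancel₀ (by exact_mod_cast hd0.ne' : (d:ℂ) ≠ 0)]

lemma trace_Fmat : (Fmat d).trace = (d:ℂ) := by
  unfold Matrix.trace Fmat
  simp only [Matrix.diag]
  rw [show (∑ p : Fin d × Fin d, (if p.1 = p.2 ∧ p.2 = p.1 then (1:ℂ) else 0))
      = ∑ p : Fin d × Fin d, (if p.1 = p.2 then (1:ℂ) else 0) from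
    Finset.sum_congr rfl fun p _ => by
      congr 1
      rw [eq_iff_iff]
      exact ⟨fun h => h.1, fun h => ⟨h, h.symm⟩⟩]
  rw [sum_ite_diag (fun _ => (1:ℂ))]
  simp

lemma maxEnt_mul_self (hd0 : 0 < d) : maxEnt d * maxEnt d = maxEnt d := by
  ext p q
  simp only [Matrix.mul_apply, maxEnt, ite_mul, zero_mul, mul_ite, mul_zero, ite_and]
  by_cases h1 : p.1 = p.2 <;> by_cases h2 : q.1 = q.2 <;> simp [h1, h2]
  rw [show (∑ x : Fin d × Fin d, if x.1 = x.2 then if x.1 = x.2 then (↑d:ℂ)⁻¹ * (↑d)⁻¹ else 0 else 0)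
      = ∑ x : Fin d × Fin d, if x.1 = x.2 then (↑d:ℂ)⁻¹ * (↑d)⁻¹ else 0 from
    Finset.sum_congr rfl fun x _ => by split_ifs <;> rfl]
  rw [sum_ite_diag (fun _ => ((d:ℂ))⁻¹ * ((d:ℂ))⁻¹)]
  simp
  rw [← mul_assoc, mul_inv_cancel₀ (by exact_mod_cast hd0.ne' : (d:ℂ) ≠ 0), one_mul]

lemma trace_mul_apply (A B : BMat d) :
    (A * B).trace = ∑ p : Fin d × Fin d, ∑ q : Fin d × Fin d, A p q * B q p := by
  unfold Matrix.trace
  simp [Matrix.diag_apply, Matrix.mul_apply]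

lemma trace_mul_maxEnt (M : BMat d) :
    (M * maxEnt d).trace = (d:ℂ)⁻¹ * ∑ i, ∑ j, M (i,i) (j,j) := by
  rw [trace_mul_apply]
  have h1 : ∀ p : Fin d × Fin d, (∑ q : Fin d × Fin d, M p q * maxEnt d q p)
      = if p.1 = p.2 then ∑ j, M p (j,j) * (d:ℂ)⁻¹ else 0 := by
    intro p
    by_cases hp : p.1 = p.2
    · simp only [hp, if_true]
      rw [← sum_ite_diag (fun q => M p q * (d:ℂ)⁻¹)]
      refine Finset.sum_congr rfl fun q _ => ?_
      by_cases hq : q.1 = q.2 <;> simp [maxEnt, hp, hq]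
    · simp only [hp, if_false]
      refine Finset.sum_eq_zero fun q _ => ?_
      simp [maxEnt, hp]
  simp only [h1]
  rw [sum_ite_diag (fun p => ∑ j, M p (j,j) * (d:ℂ)⁻¹)]
  rw [Finset.mul_sum]
  refine Finset.sum_congr rfl fun i _ => ?_
  rw [Finset.mul_sum]
  refine Finset.sum_congr rfl fun j _ => ?_
  ring

lemma trace_ptB_mul_F (M : BMat d) :
    (ptB M * Fmat d).trace = ∑ i, ∑ j, M (i,i) (j,j) := by
  rw [trace_mul_apply]
  have h1 : ∀ p : Fin d × Fin d, (∑ q : Fin d × Fin d, ptB M p q * Fmat d q p)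
      = M (p.1, p.1) (p.2, p.2) := by
    intro p
    rw [show (∑ q : Fin d × Fin d, ptB M p q * Fmat d q p)
        = ∑ q : Fin d × Fin d, (if q = (p.2, p.1) then ptB M p q else 0) from
      Finset.sum_congr rfl fun q _ => by
        simp only [Fmat, mul_ite, mul_one, mul_zero]
        congr 1
        simp [Prod.ext_iff, and_comm]]
    rw [Finset.sum_ite_eq' Finset.univ ((p.2, p.1) : Fin d × Fin d) (fun q => ptB M p q)]
    simp [ptB]
  simp only [h1]
  rw [Fintype.sum_prod_type]

lemma diff_eq (p q γ : ℝ) :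
    iso d q - (γ:ℂ) • iso d p = ((q - γ*p : ℝ) : ℂ) • maxEnt d +
      (((((1-q) - γ*(1-p)) / ((d:ℝ)^2 - 1)) : ℝ) : ℂ) • ((1 : BMat d) - maxEnt d) := by
  unfold iso maxEntPerp
  have h : ((d:ℂ)^2 - 1)⁻¹ = ((((d:ℝ)^2 - 1)⁻¹ : ℝ) : ℂ) := by push_cast; ring
  rw [h]
  push_cast
  module

lemma value_formula (M : BMat d) (p q γ : ℝ) :
    ((M * (iso d q - (γ:ℂ) • iso d p)).trace).re
      = (q - γ*p) * ((M * maxEnt d).trace).re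
        + (((1-q) - γ*(1-p)) / ((d:ℝ)^2 - 1))
            * ((M.trace).re - ((M * maxEnt d).trace).re) := by
  rw [diff_eq, mul_add, Matrix.mul_smul, Matrix.mul_smul, Matrix.mul_sub, Matrix.mul_one,
    Matrix.trace_add, Matrix.trace_smul, Matrix.trace_smul, Matrix.trace_sub]
  simp only [smul_eq_mul, Complex.add_re, Complex.re_ofReal_mul, Complex.sub_re]

-- trace identity : (ptB M * F).trace = d * (M*Φ).trace
lemma trace_ptB_mul_F_eq (hd0 : 0 < d) (M : BMat d) :
    (ptB M * Fmat d).trace = (d:ℂ) * (M * maxEnt d).trace := by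
  rw [trace_ptB_mul_F, trace_mul_maxEnt, ← mul_assoc,
    mul_inv_cancel₀ (by exact_mod_cast hd0.ne' : (d:ℂ) ≠ 0), one_mul]

lemma feasible_bounds {M : BMat d} (hd0 : 0 < d)
    (h1 : M.PosSemidef) (h2 : ((1:BMat d) - M).PosSemidef)
    (h3 : (ptB M).PosSemidef) (h4 : ((1:BMat d) - ptB M).PosSemidef) :
    0 ≤ ((M * maxEnt d).trace).re ∧ ((M * maxEnt d).trace).re ≤ 1 ∧
      (d:ℝ) * ((M * maxEnt d).trace).re ≤ (M.trace).re ∧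
      (M.trace).re ≤ (d:ℝ)^2 - d + d * ((M * maxEnt d).trace).re := by
  set t := ((M * maxEnt d).trace).re with ht
  have hdC : ((d:ℂ)) = (((d:ℝ)):ℂ) := by push_cast; rfl
  have htF : ((ptB M * Fmat d).trace).re = (d:ℝ) * t := by
    rw [trace_ptB_mul_F_eq hd0, hdC, Complex.re_ofReal_mul]
  refine ⟨psd_mul_trace_re_nonneg h1 maxEnt_psd, ?_, ?_, ?_⟩
  · have := psd_mul_trace_re_nonneg h2 maxEnt_psd
    rw [Matrix.sub_mul, Matrix.one_mul, Matrix.trace_sub, Complex.sub_re,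
      trace_maxEnt hd0, Complex.one_re] at this
    linarith [this]
  · have := psd_mul_trace_re_nonneg h3 one_sub_F_psd
    rw [Matrix.mul_sub, Matrix.mul_one, Matrix.trace_sub, Complex.sub_re,
      trace_ptB, htF] at this
    linarith [this]
  · have := psd_mul_trace_re_nonneg h4 one_sub_F_psd
    rw [Matrix.sub_mul, Matrix.one_mul, Matrix.mul_sub, Matrix.mul_one,
      Matrix.trace_sub, Matrix.trace_sub, Matrix.trace_sub, Complex.sub_re,
      Complex.sub_re, Complex.sub_re, trace_one_b, trace_Fmat, trace_ptB, htF] at this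
    have hre1 : (((d:ℂ))^2).re = (d:ℝ)^2 := by
      rw [hdC]
      norm_cast
    have hre2 : ((d:ℂ)).re = (d:ℝ) := by rw [hdC]; exact Complex.ofReal_re _
    rw [hre1, hre2] at this
    linarith [this]

lemma scalar_ub {D a b t m : ℝ} (hD : 2 ≤ D) (hab : a + b ≤ 0)
    (ht0 : 0 ≤ t) (ht1 : t ≤ 1) (h3 : D * t ≤ m) (h4 : m ≤ D^2 - D + D*t) :
    a * t + b / (D^2 - 1) * (m - t)
      ≤ max 0 (max (a + b/(D+1)) (D/(D+1) * b)) := by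
  have hD1 : (0:ℝ) < D - 1 := by linarith
  have hD2 : (0:ℝ) < D + 1 := by linarith
  have hDD : (0:ℝ) < D^2 - 1 := by nlinarith
  rcases le_or_gt b 0 with hb | hb
  · have hbd : b / (D^2 - 1) ≤ 0 := div_nonpos_of_nonpos_of_nonneg hb hDD.le
    have step1 : b / (D^2 - 1) * (m - t) ≤ b / (D^2 - 1) * ((D-1) * t) :=
      mul_le_mul_of_nonpos_left (by linarith) hbd
    have step2 : b / (D^2 - 1) * ((D-1) * t) = b / (D+1) * t := by
      field_simp
      ring
    have key : a * t + b / (D^2 - 1) * (m - t) ≤ t * (a + b/(D+1)) := by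
      rw [step2] at step1
      nlinarith [step1]
    rcases le_or_gt (a + b/(D+1)) 0 with h | h
    · have : t * (a + b/(D+1)) ≤ 0 := mul_nonpos_of_nonneg_of_nonpos ht0 h
      calc a * t + b / (D^2 - 1) * (m - t) ≤ 0 := by linarith
        _ ≤ _ := le_max_left _ _
    · have : t * (a + b/(D+1)) ≤ a + b/(D+1) := by nlinarith
      calc a * t + b / (D^2 - 1) * (m - t) ≤ a + b/(D+1) := by linarith
        _ ≤ max (a + b/(D+1)) (D/(D+1) * b) := le_max_left _ _
        _ ≤ _ := le_max_right _ _
  · have hbd : 0 ≤ b / (D^2 - 1) := le_of_lt (div_pos hb hDD)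
    have step1 : b / (D^2 - 1) * (m - t) ≤ b / (D^2 - 1) * (D^2 - D + (D-1)*t) :=
      mul_le_mul_of_nonneg_left (by linarith) hbd
    have step2 : b / (D^2 - 1) * (D^2 - D + (D-1)*t) = D/(D+1)*b + b/(D+1)*t := by
      field_simp
      ring
    have step3 : a * t ≤ -b * t := mul_le_mul_of_nonneg_right (by linarith) ht0
    have step4 : b/(D+1)*t ≤ b*t :=
      mul_le_mul_of_nonneg_right (div_le_self hb.le (by linarith)) ht0
    calc a * t + b / (D^2 - 1) * (m - t) ≤ D/(D+1)*b := by
          rw [step2] at step1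
          nlinarith [step1, step3, step4]
      _ ≤ max (a + b/(D+1)) (D/(D+1) * b) := le_max_right _ _
      _ ≤ _ := le_max_right _ _

def Mone (d : ℕ) : BMat d :=
  maxEnt d + ((((d:ℝ)+1)⁻¹ : ℝ) : ℂ) • ((1:BMat d) - maxEnt d)

section Mone
variable (hd : 2 ≤ d)
include hd

lemma hd0' : 0 < d := lt_of_lt_of_le (by norm_num) hd

lemma dC_ne : ((d:ℂ)) ≠ 0 := by
  exact_mod_cast (Nat.cast_ne_zero (R := ℂ)).mpr (hd0' hd).ne'

lemma dC1_ne : ((d:ℂ) + 1) ≠ 0 := by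
  have : ((d:ℂ) + 1) = (((d:ℝ) + 1 : ℝ) : ℂ) := by push_cast; ring
  rw [this, Ne, Complex.ofReal_eq_zero]
  positivity

lemma Mone_psd : (Mone d).PosSemidef :=
  maxEnt_psd.add (psd_smul (one_sub_maxEnt_psd (hd0' hd)) (by positivity))

lemma one_sub_Mone : (1:BMat d) - Mone d
    = ((1 - ((d:ℝ)+1)⁻¹ : ℝ) : ℂ) • ((1:BMat d) - maxEnt d) := by
  unfold Mone
  push_cast
  module

lemma one_sub_Mone_psd : ((1:BMat d) - Mone d).PosSemidef := by
  rw [one_sub_Mone hd]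
  refine psd_smul (one_sub_maxEnt_psd (hd0' hd)) ?_
  have h1 : ((d:ℝ)+1)⁻¹ ≤ 1 := by
    rw [inv_le_one_iff₀]
    right
    have : (2:ℝ) ≤ (d:ℝ) := by exact_mod_cast hd
    linarith
  linarith

lemma ptB_Mone : ptB (Mone d) = ((((d:ℝ)+1)⁻¹ : ℝ) : ℂ) • ((1:BMat d) + Fmat d) := by
  unfold Mone
  rw [ptB_add, ptB_smul, ptB_sub, ptB_one, ptB_maxEnt]
  have hdne := dC_ne hd
  have hdne1 := dC1_ne hd
  match_scalars <;> push_cast <;> field_simp <;> ring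

lemma ptB_Mone_psd : (ptB (Mone d)).PosSemidef := by
  rw [ptB_Mone hd]
  exact psd_smul one_add_F_psd (by positivity)

lemma one_sub_ptB_Mone : (1:BMat d) - ptB (Mone d)
    = ((1 - 2*((d:ℝ)+1)⁻¹ : ℝ) : ℂ) • (1:BMat d)
      + ((((d:ℝ)+1)⁻¹ : ℝ) : ℂ) • ((1:BMat d) - Fmat d) := by
  rw [ptB_Mone hd]
  push_cast
  module

lemma one_sub_ptB_Mone_psd : ((1:BMat d) - ptB (Mone d)).PosSemidef := by
  rw [one_sub_ptB_Mone hd]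
  have h2 : (0:ℝ) ≤ 1 - 2*((d:ℝ)+1)⁻¹ := by
    have hD : (2:ℝ) ≤ (d:ℝ) := by exact_mod_cast hd
    have h3 : ((d:ℝ)+1)⁻¹ ≤ 3⁻¹ := by
      apply inv_anti₀ <;> linarith
    linarith
  exact (psd_smul Matrix.PosSemidef.one h2).add (psd_smul one_sub_F_psd (by positivity))

lemma Mone_mul_maxEnt : Mone d * maxEnt d = maxEnt d := by
  unfold Mone
  rw [Matrix.add_mul, Matrix.smul_mul, Matrix.sub_mul, Matrix.one_mul,
    maxEnt_mul_self (hd0' hd), sub_self, smul_zero, add_zero]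

lemma Mone_trace : (Mone d).trace = ((d:ℝ):ℂ) := by
  unfold Mone
  rw [Matrix.trace_add, Matrix.trace_smul, Matrix.trace_sub, trace_one_b,
    trace_maxEnt (hd0' hd), smul_eq_mul]
  have hdne1 := dC1_ne hd
  have hdne := dC_ne hd
  push_cast
  field_simp
  ring
end Mone


end Aux

/-- PPT-measured hockey-stick divergence for isotropic states. -/
theorem stmt_13 (d : ℕ) (hd : 2 ≤ d) (p q : ℝ)
    (hp : p ∈ Set.Icc (0 : ℝ) 1) (hq : q ∈ Set.Icc (0 : ℝ) 1)
    (γ : ℝ) (hγ : 1 ≤ γ) :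
    EgPPT γ (iso d q) (iso d p) =
      max 0 (max ((q - γ * p) + ((1 - q) - γ * (1 - p)) / (d + 1))
        ((d / (d + 1) : ℝ) * ((1 - q) - γ * (1 - p)))) := by
  have hD : (2:ℝ) ≤ (d:ℝ) := by exact_mod_cast hd
  have hd0 : 0 < d := lt_of_lt_of_le (by norm_num) hd
  have hDne : ((d:ℝ)) ≠ 0 := by positivity
  have hD1ne : ((d:ℝ) + 1) ≠ 0 := by positivity
  have hDm1ne : ((d:ℝ) - 1) ≠ 0 := by intro h; linarith
  have hDDne : ((d:ℝ)^2 - 1) ≠ 0 := by intro h; nlinarith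
  unfold EgPPT
  apply IsGreatest.csSup_eq
  constructor
  · -- the max is attained
    have mem0 : (0:ℝ) ∈ {x : ℝ | ∃ M : BMat d, M.PosSemidef ∧ ((1 : BMat d) - M).PosSemidef ∧
        (ptB M).PosSemidef ∧ ((1 : BMat d) - ptB M).PosSemidef ∧
        x = ((M * (iso d q - (γ : ℂ) • iso d p)).trace).re} := by
      refine ⟨0, Matrix.PosSemidef.zero, ?_, ?_, ?_, ?_⟩
      · rw [sub_zero]; exact Matrix.PosSemidef.one
      · rw [ptB_zero]; exact Matrix.PosSemidef.zero
      · rw [ptB_zero, sub_zero]; exact Matrix.PosSemidef.one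
      · rw [Matrix.zero_mul, Matrix.trace_zero, Complex.zero_re]
    have mem1 : (q - γ * p) + ((1 - q) - γ * (1 - p)) / ((d:ℝ) + 1) ∈
        {x : ℝ | ∃ M : BMat d, M.PosSemidef ∧ ((1 : BMat d) - M).PosSemidef ∧
        (ptB M).PosSemidef ∧ ((1 : BMat d) - ptB M).PosSemidef ∧
        x = ((M * (iso d q - (γ : ℂ) • iso d p)).trace).re} := by
      refine ⟨Mone d, Mone_psd hd, one_sub_Mone_psd hd, ptB_Mone_psd hd,
        one_sub_ptB_Mone_psd hd, ?_⟩
      rw [value_formula, Mone_mul_maxEnt hd, trace_maxEnt hd0, Complex.one_re,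
        Mone_trace hd, Complex.ofReal_re]
      field_simp
      ring
    have mem2 : ((d:ℝ) / ((d:ℝ) + 1)) * ((1 - q) - γ * (1 - p)) ∈
        {x : ℝ | ∃ M : BMat d, M.PosSemidef ∧ ((1 : BMat d) - M).PosSemidef ∧
        (ptB M).PosSemidef ∧ ((1 : BMat d) - ptB M).PosSemidef ∧
        x = ((M * (iso d q - (γ : ℂ) • iso d p)).trace).re} := by
      refine ⟨(1:BMat d) - Mone d, one_sub_Mone_psd hd, ?_, ?_, ?_, ?_⟩
      · rw [sub_sub_cancel]; exact Mone_psd hd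
      · rw [ptB_sub, ptB_one]; exact one_sub_ptB_Mone_psd hd
      · rw [ptB_sub, ptB_one, sub_sub_cancel]; exact ptB_Mone_psd hd
      · rw [value_formula]
        have h1 : ((1:BMat d) - Mone d) * maxEnt d = 0 := by
          rw [Matrix.sub_mul, Matrix.one_mul, Mone_mul_maxEnt hd, sub_self]
        have h2 : ((1:BMat d) - Mone d).trace = (((d:ℝ)^2 - d : ℝ) : ℂ) := by
          rw [Matrix.trace_sub, trace_one_b, Mone_trace hd]
          push_cast
          ring
        rw [h1, h2, Matrix.trace_zero, Complex.zero_re, Complex.ofReal_re]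
        field_simp
        ring
    rcases max_choice (0:ℝ) (max ((q - γ * p) + ((1 - q) - γ * (1 - p)) / ((d:ℝ) + 1))
        (((d:ℝ) / ((d:ℝ) + 1)) * ((1 - q) - γ * (1 - p)))) with h | h
    · rw [h]; exact mem0
    · rw [h]
      rcases max_choice ((q - γ * p) + ((1 - q) - γ * (1 - p)) / ((d:ℝ) + 1))
          (((d:ℝ) / ((d:ℝ) + 1)) * ((1 - q) - γ * (1 - p))) with h2 | h2
      · rw [h2]; exact mem1
      · rw [h2]; exact mem2
  · -- upper bound
    rintro x ⟨M, h1, h2, h3, h4, rfl⟩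
    rw [value_formula]
    obtain ⟨ht0, ht1, h3', h4'⟩ := feasible_bounds hd0 h1 h2 h3 h4
    exact scalar_ub hD (by linarith) ht0 ht1 h3' (by linarith)
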